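/- Let Q_t, Q_0, G: A → ℝ on a finite action set A with |Q_0(a) - Q_t(a)| ≤ ε for all a. Fix α ∈ [0,1], let ã = argmax_a [αQ_0(a) + (1-α)G(a)] and a_m = argmax_a G(a). Define ζ = (Q_0(ã) + G(ã)) - (Q_0(a_m) + G(a_m)). If ã ≠ a_m and 2ε ≤ ζ, then Q_t(ã) ≥ Q_t(a_m). -/
import Mathlib


/-- If PA-MCTS and pure MCTS choose different actions and `2 ε ≤ ζ`, the
PA-MCTS action has true value at least that of the MCTS action. -/
theorem pamcts_better_than_mcts
    {A : Type*} [Fintype A]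
    (Qt Q0 G : A → ℝ) (ε α : ℝ) (hε0 : 0 ≤ ε)
    (hε : ∀ a, |Q0 a - Qt a| ≤ ε)
    (hα0 : 0 ≤ α) (hα1 : α ≤ 1)
    (atilde am : A)
    (htilde : ∀ a, α * Q0 a + (1 - α) * G a ≤ α * Q0 atilde + (1 - α) * G atilde)
    (hm : ∀ a, G a ≤ G am)
    (hne : atilde ≠ am)
    (hζ : 2 * ε ≤ (Q0 atilde + G atilde) - (Q0 am + G am)) :
    Qt atilde ≥ Qt am := by
  have h1 := abs_le.1 (hε atilde)
  have h2 := abs_le.1 (hε am)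
  have h3 := hm atilde
  linarith [h1.1, h1.2, h2.1, h2.2]
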